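/- Let p be an odd prime. Every element of the set 𝒢 lies in the Hilbert ideal I_H, and the ideal of R generated by 𝒢 equals I_H. -/

import Mathlib

open MvPolynomial

noncomputable section

abbrev DVar (r s : ℕ) := (Fin r ⊕ Fin r) ⊕ (Fin s ⊕ Fin s)

def dswap {r s : ℕ} : DVar r s → DVar r s
  | .inl (.inl i) => .inl (.inr i)
  | .inl (.inr i) => .inl (.inl i)
  | .inr (.inl j) => .inr (.inr j)
  | .inr (.inr j) => .inr (.inl j)

def sigmaMap (F : Type*) [Field F] (r s : ℕ) :
    MvPolynomial (DVar r s) F →ₐ[F] MvPolynomial (DVar r s) F :=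
  MvPolynomial.rename dswap

def rhoCoeff {F : Type*} [Field F] {r s : ℕ} (lam : Fin r → F) : DVar r s → F
  | .inl (.inl i) => lam i
  | .inl (.inr i) => (lam i)⁻¹
  | .inr _ => 1

def rhoMap (F : Type*) [Field F] (r s : ℕ) (lam : Fin r → F) :
    MvPolynomial (DVar r s) F →ₐ[F] MvPolynomial (DVar r s) F :=
  MvPolynomial.aeval fun v => MvPolynomial.C (rhoCoeff lam v) * MvPolynomial.X v

def HilbertIdeal (F : Type*) [Field F] (r s : ℕ) (lam : Fin r → F) :
    Ideal (MvPolynomial (DVar r s) F) :=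
  Ideal.span {f | sigmaMap F r s f = f ∧ rhoMap F r s lam f = f ∧ constantCoeff f = 0}

def IsMonomial {σ F : Type*} [CommSemiring F] (f : MvPolynomial σ F) : Prop :=
  ∃ d : σ →₀ ℕ, f = monomial d 1

def GSet (F : Type*) [Field F] (r s p : ℕ) (lam : Fin r → F) :
    Set (MvPolynomial (DVar r s) F) :=
  {f | ∃ m, IsMonomial m ∧ rhoMap F r s lam m = m ∧ sigmaMap F r s m ≠ m ∧
      m.totalDegree ≤ p ∧ f = m + sigmaMap F r s m} ∪
  {f | ∃ (m : MvPolynomial (DVar r s) F) (v : DVar r s), IsMonomial m ∧ rhoMap F r s lam m = m ∧ m.totalDegree ≤ p ∧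
      X v ∣ m ∧ f = X v * m} ∪
  {f | (∃ i : Fin r, f = X (Sum.inl (Sum.inl i)) * X (Sum.inl (Sum.inr i))) ∨
       (∃ j : Fin s, f = X (Sum.inr (Sum.inl j)) * X (Sum.inr (Sum.inr j)))}

def lmExp {σ F : Type*} [CommSemiring F] (mo : MonomialOrder σ) (f : MvPolynomial σ F) :
    σ →₀ ℕ :=
  mo.toSyn.symm (f.support.sup fun d => mo.toSyn d)

namespace DihedralAux

lemma dswap_dswap {r s : ℕ} (v : DVar r s) : dswap (dswap v) = v := by
  rcases v with (i | i) | (j | j) <;> rfl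

lemma dswap_ne {r s : ℕ} (v : DVar r s) : dswap v ≠ v := by
  rcases v with (i | i) | (j | j) <;> simp [dswap]

lemma dswap_inj {r s : ℕ} : Function.Injective (dswap (r := r) (s := s)) :=
  Function.Involutive.injective dswap_dswap

/-- action of σ on exponent vectors -/
def sde {r s : ℕ} (d : DVar r s →₀ ℕ) : DVar r s →₀ ℕ :=
  Finsupp.mapDomain dswap d

lemma sde_apply {r s : ℕ} (d : DVar r s →₀ ℕ) (v : DVar r s) :
    sde d v = d (dswap v) := by
  conv_lhs => rw [← dswap_dswap v]
  exact Finsupp.mapDomain_apply dswap_inj d (dswap v)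

lemma sde_sde {r s : ℕ} (d : DVar r s →₀ ℕ) : sde (sde d) = d := by
  ext v; rw [sde_apply, sde_apply, dswap_dswap]

lemma sde_add {r s : ℕ} (d e : DVar r s →₀ ℕ) : sde (d + e) = sde d + sde e :=
  Finsupp.mapDomain_add

lemma sde_eq_zero_iff {r s : ℕ} {d : DVar r s →₀ ℕ} : sde d = 0 ↔ d = 0 := by
  constructor
  · intro h; ext v
    have h2 : sde d (dswap v) = (0 : DVar r s →₀ ℕ) (dswap v) := by rw [h]
    rw [sde_apply, dswap_dswap] at h2
    simpa using h2
  · rintro rfl; rfl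

lemma sde_degree {r s : ℕ} (d : DVar r s →₀ ℕ) :
    ((sde d).sum fun _ n => n) = d.sum fun _ n => n := by
  classical
  exact Finsupp.sum_mapDomain_index (fun _ => rfl) (fun _ a b => rfl)

lemma sigmaMap_monomial {F : Type*} [Field F] {r s : ℕ} (d : DVar r s →₀ ℕ) (c : F) :
    sigmaMap F r s (monomial d c) = monomial (sde d) c :=
  rename_monomial _ _ _

lemma sigmaMap_sigmaMap {F : Type*} [Field F] {r s : ℕ} (f : MvPolynomial (DVar r s) F) :
    sigmaMap F r s (sigmaMap F r s f) = f := by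
  show (rename dswap) ((rename dswap) f) = f
  rw [rename_rename]
  have : (dswap ∘ dswap : DVar r s → DVar r s) = id := funext dswap_dswap
  rw [this, rename_id, AlgHom.id_apply]

lemma coeff_sigmaMap {F : Type*} [Field F] {r s : ℕ} (f : MvPolynomial (DVar r s) F)
    (d : DVar r s →₀ ℕ) : coeff (sde d) (sigmaMap F r s f) = coeff d f :=
  coeff_rename_mapDomain dswap dswap_inj f d

lemma coeff_of_sigma_inv {F : Type*} [Field F] {r s : ℕ} {f : MvPolynomial (DVar r s) F}
    (hf : sigmaMap F r s f = f) (d : DVar r s →₀ ℕ) : coeff (sde d) f = coeff d f := by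
  conv_lhs => rw [← hf]
  exact coeff_sigmaMap f d



variable {F : Type*} [Field F] {r s : ℕ}

/-- the ρ-eigenvalue of a monomial -/
def chi (lam : Fin r → F) (d : DVar r s →₀ ℕ) : F :=
  d.prod fun v n => rhoCoeff lam v ^ n

lemma rhoCoeff_dswap (lam : Fin r → F) (v : DVar r s) :
    rhoCoeff lam (dswap v) = (rhoCoeff lam v)⁻¹ := by
  rcases v with (i | i) | (j | j) <;> simp [dswap, rhoCoeff]

lemma rhoCoeff_ne_zero {lam : Fin r → F} (hl0 : ∀ i, lam i ≠ 0) (v : DVar r s) :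
    rhoCoeff lam v ≠ 0 := by
  rcases v with (i | i) | (j | j)
  · exact hl0 i
  · exact inv_ne_zero (hl0 i)
  · exact one_ne_zero
  · exact one_ne_zero

lemma chi_add (lam : Fin r → F) (d e : DVar r s →₀ ℕ) :
    chi lam (d + e) = chi lam d * chi lam e := by
  classical
  exact Finsupp.prod_add_index (fun v _ => pow_zero _) (fun v _ a b => pow_add _ a b)

lemma chi_ne_zero {lam : Fin r → F} (hl0 : ∀ i, lam i ≠ 0) (d : DVar r s →₀ ℕ) :
    chi lam d ≠ 0 := by
  classical
  apply Finset.prod_ne_zero_iff.2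
  intro v _
  exact pow_ne_zero _ (rhoCoeff_ne_zero hl0 v)

lemma chi_sde (lam : Fin r → F) (d : DVar r s →₀ ℕ) :
    chi lam (sde d) = (chi lam d)⁻¹ := by
  classical
  unfold chi sde
  rw [Finsupp.prod_mapDomain_index_inj dswap_inj]
  simp only [rhoCoeff_dswap, inv_pow, Finsupp.prod, Finset.prod_inv_distrib]

lemma rhoMap_monomial (lam : Fin r → F) (d : DVar r s →₀ ℕ) (c : F) :
    rhoMap F r s lam (monomial d c) = monomial d (c * chi lam d) := by
  classical
  show aeval _ (monomial d c) = _
  rw [aeval_monomial]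
  have h1 : (d.prod fun v n => (C (rhoCoeff lam v) * X v : MvPolynomial (DVar r s) F) ^ n)
      = C (chi lam d) * d.prod fun v n => (X v : MvPolynomial (DVar r s) F) ^ n := by
    unfold chi
    simp only [Finsupp.prod, map_prod, ← Finset.prod_mul_distrib]
    apply Finset.prod_congr rfl
    intro v _
    rw [mul_pow, C_pow]
  rw [h1, monomial_eq, algebraMap_eq, ← mul_assoc, ← C_mul]

variable {F : Type*} [Field F] {r s : ℕ}

lemma coeff_rhoMap (lam : Fin r → F) (f : MvPolynomial (DVar r s) F) (d : DVar r s →₀ ℕ) :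
    coeff d (rhoMap F r s lam f) = chi lam d * coeff d f := by
  classical
  induction f using MvPolynomial.induction_on' with
  | monomial u a =>
    rw [rhoMap_monomial, coeff_monomial, coeff_monomial]
    split
    · next h => subst h; ring
    · simp
  | add f g hf hg =>
    rw [map_add, coeff_add, coeff_add, hf, hg, mul_add]

lemma chi_eq_one_of_mem_support {lam : Fin r → F} {f : MvPolynomial (DVar r s) F}
    (hf : rhoMap F r s lam f = f) {d : DVar r s →₀ ℕ} (hd : coeff d f ≠ 0) :
    chi lam d = 1 := by
  have h := coeff_rhoMap lam f d
  rw [hf] at h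
  have : chi lam d * coeff d f = 1 * coeff d f := by rw [← h, one_mul]
  exact mul_right_cancel₀ hd this

lemma finsupp_sum_toMultiset {V M : Type*} [DecidableEq V] [AddCommMonoid M]
    (f : V →₀ ℕ) (w : V → M) :
    (f.toMultiset.map w).sum = f.sum fun v n => n • w v := by
  classical
  induction f using Finsupp.induction with
  | zero => simp
  | single_add a n f han hn ih =>
    rw [Finsupp.toMultiset_add, Multiset.map_add, Multiset.sum_add, ih,
      Finsupp.sum_add_index (by simp) (by intro v _ a b; rw [add_smul])]
    congr 1
    rw [Finsupp.toMultiset_single, Finsupp.sum_single_index (by simp),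
      Multiset.map_nsmul]
    rw [Multiset.sum_nsmul]
    simp

lemma finsupp_degree_toMultiset {V : Type*} [DecidableEq V] (f : V →₀ ℕ) :
    (Multiset.card f.toMultiset : ℕ) = f.sum fun _ n => n :=
  Finsupp.card_toMultiset f

/-- zero-sum block lemma: from any exponent vector of degree ≥ p one can extract a nonzero
sub-vector of degree ≤ p whose weights sum to zero mod p. -/
lemma exists_zerosum {V : Type*} [DecidableEq V] {p : ℕ} (hp : p.Prime) (w : V → ZMod p)
    (d : V →₀ ℕ) (hd : p ≤ d.sum fun _ n => n) :
    ∃ b : V →₀ ℕ, b ≤ d ∧ b ≠ 0 ∧ (b.sum fun _ n => n) ≤ p ∧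
      (b.sum fun v n => n • w v) = 0 := by
  classical
  haveI : NeZero p := ⟨hp.ne_zero⟩
  haveI : Fact p.Prime := ⟨hp⟩
  set l : List V := d.toMultiset.toList with hl
  have hlen : p ≤ l.length := by
    rw [hl, Multiset.length_toList, finsupp_degree_toMultiset]; exact hd
  set S : ℕ → ZMod p := fun k => ((l.take k).map w).sum with hS
  have hcard : Fintype.card (ZMod p) < Fintype.card (Fin (p + 1)) := by
    rw [ZMod.card, Fintype.card_fin]; omega
  suffices H : ∀ a b : ℕ, a < b → b ≤ p → S a = S b →
      ∃ b : V →₀ ℕ, b ≤ d ∧ b ≠ 0 ∧ (b.sum fun _ n => n) ≤ p ∧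
        (b.sum fun v n => n • w v) = 0 by
    obtain ⟨i, j, hij, hSij⟩ := Fintype.exists_ne_map_eq_of_card_lt
      (fun i : Fin (p + 1) => S i) hcard
    rcases lt_or_gt_of_ne hij with h | h
    · exact H i j h (by omega) hSij
    · exact H j i h (by omega) hSij.symm
  intro a b hlt hbp hSab
  set block : List V := (l.take b).drop a with hblock
  have hsub : block.Sublist l := ((l.take b).drop_sublist a).trans (l.take_sublist _)
  have hblen : block.length = b - a := by
    rw [hblock, List.length_drop, List.length_take]
    omega
  set bF : V →₀ ℕ := Multiset.toFinsupp (↑block : Multiset V) with hbF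
  refine ⟨bF, ?_, ?_, ?_, ?_⟩
  · intro v
    have hle : (↑block : Multiset V) ≤ d.toMultiset := by
      rw [hl] at hsub
      have h2 := hsub.subperm
      rwa [← Multiset.coe_le, Multiset.coe_toList] at h2
    have h3 := Multiset.count_le_of_le v hle
    simpa [hbF, Finsupp.count_toMultiset] using h3
  · intro h0
    have h4 : (↑block : Multiset V) = 0 := by
      have h5 := congrArg Finsupp.toMultiset (h0 : bF = 0)
      simpa [hbF] using h5
    have h6 : block.length = 0 := by simpa using congrArg Multiset.card h4
    omega
  · have h7 : (bF.sum fun _ n => n) = block.length := by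
      rw [← finsupp_degree_toMultiset, hbF, Multiset.toFinsupp_toMultiset,
        Multiset.coe_card]
    rw [h7, hblen]; omega
  · have hsum : (bF.sum fun v n => n • w v) = (block.map w).sum := by
      rw [← finsupp_sum_toMultiset, hbF, Multiset.toFinsupp_toMultiset]
      rfl
    have hsplit : l.take b = l.take a ++ block := by
      have h9 := List.take_append_drop a (l.take b)
      rw [List.take_take, min_eq_left (le_of_lt hlt)] at h9
      exact h9.symm
    have h8 : S b = S a + (block.map w).sum := by
      show ((l.take b).map w).sum = _
      rw [hsplit, List.map_append, List.sum_append]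
    rw [hsum]
    rw [← hSab] at h8
    exact (left_eq_add.mp h8).symm ▸ rfl

lemma sde_single {r s : ℕ} (u : DVar r s) (n : ℕ) :
    sde (Finsupp.single u n) = Finsupp.single (dswap u) n :=
  Finsupp.mapDomain_single

lemma chi_single (lam : Fin r → F) (u : DVar r s) (n : ℕ) :
    chi lam (Finsupp.single u n) = rhoCoeff lam u ^ n :=
  Finsupp.prod_single_index (pow_zero _)

lemma degree_zero_iff {V : Type*} (d : V →₀ ℕ) : (d.sum fun _ n => n) = 0 ↔ d = 0 := by
  rw [Finsupp.sum, Finset.sum_eq_zero_iff]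
  constructor
  · intro h; ext v
    by_cases hv : d v = 0
    · simpa using hv
    · exact absurd (h v (Finsupp.mem_support_iff.2 hv)) hv
  · intro h v _; simp [h]

lemma degree_add {V : Type*} (d e : V →₀ ℕ) :
    ((d + e).sum fun _ n => n) = (d.sum fun _ n => n) + (e.sum fun _ n => n) := by
  classical
  exact Finsupp.sum_add_index (fun _ _ => rfl) (fun _ _ a b => rfl)

lemma monomial_one_inj {d e : DVar r s →₀ ℕ} (h : (monomial d (1 : F)) = monomial e 1) :
    d = e := by
  by_contra hne
  have h2 := congrArg (coeff d) h
  rw [coeff_monomial, coeff_monomial, if_pos rfl, if_neg (by exact fun he => hne (he.symm))] at h2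
  exact one_ne_zero h2

lemma monomial_coeff_inj {d : DVar r s →₀ ℕ} {a b : F} (h : monomial d a = monomial d b) :
    a = b := by
  have h2 := congrArg (coeff d) h
  rwa [coeff_monomial, coeff_monomial, if_pos rfl, if_pos rfl] at h2

lemma poly_add_self [CharP F 2] (f : MvPolynomial (DVar r s) F) : f + f = 0 :=
  CharTwo.add_self_eq_zero f

lemma chi_eq_one_of_rho_fixed {lam : Fin r → F} {d : DVar r s →₀ ℕ}
    (h : rhoMap F r s lam (monomial d (1 : F)) = monomial d 1) : chi lam d = 1 := by
  rw [rhoMap_monomial, one_mul] at h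
  exact monomial_coeff_inj h

lemma chi_link {p : ℕ} (hp : p.Prime) {ζ : F} (hζ : IsPrimitiveRoot ζ p)
    {lam : Fin r → F} (hlam : ∀ i, lam i ^ p = 1) :
    ∃ w : DVar r s → ZMod p, ∀ d : DVar r s →₀ ℕ,
      (chi lam d = 1 ↔ (d.sum fun v n => n • w v) = 0) := by
  classical
  haveI : NeZero p := ⟨hp.ne_zero⟩
  have hpow : ∀ v : DVar r s, rhoCoeff lam v ^ p = 1 := by
    intro v
    rcases v with (i | i) | (j | j)
    · exact hlam i
    · show ((lam i)⁻¹) ^ p = 1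
      rw [inv_pow, hlam i, inv_one]
    · exact one_pow p
    · exact one_pow p
  choose k _ hk using fun v : DVar r s => hζ.eq_pow_of_pow_eq_one (hpow v)
  refine ⟨fun v => (k v : ZMod p), fun d => ?_⟩
  have h1 : chi lam d = ζ ^ (d.sum fun v n => k v * n) := by
    unfold chi
    rw [Finsupp.sum, Finsupp.prod, ← Finset.prod_pow_eq_pow_sum]
    apply Finset.prod_congr rfl
    intro v _
    rw [← hk v, ← pow_mul]
  rw [h1, hζ.pow_eq_one_iff_dvd, ← ZMod.natCast_eq_zero_iff]
  constructor
  · intro h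
    rw [← h]
    rw [Finsupp.sum, Finsupp.sum, Nat.cast_sum]
    apply Finset.sum_congr rfl
    intro v _
    rw [Nat.cast_mul, nsmul_eq_mul, mul_comm]
  · intro h
    rw [← h]
    rw [Finsupp.sum, Finsupp.sum, Nat.cast_sum]
    apply Finset.sum_congr rfl
    intro v _
    rw [Nat.cast_mul, nsmul_eq_mul, mul_comm]

lemma monomial_mem_of_pair_le {I : Ideal (MvPolynomial (DVar r s) F)} {v : DVar r s}
    (hI : monomial (Finsupp.single v 1 + Finsupp.single (dswap v) 1) (1 : F) ∈ I)
    {d : DVar r s →₀ ℕ} (hv : 1 ≤ d v) (hw : 1 ≤ d (dswap v)) (c : F) :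
    monomial d c ∈ I := by
  classical
  have hvv : dswap v ≠ v := dswap_ne v
  set pr : DVar r s →₀ ℕ := Finsupp.single v 1 + Finsupp.single (dswap v) 1 with hpr
  have hle : pr ≤ d := by
    intro u
    have e1 : pr u = (if v = u then 1 else 0) + (if dswap v = u then 1 else 0) := by
      simp [hpr, Finsupp.add_apply, Finsupp.single_apply]
    rw [e1]
    split_ifs with h1 h2 h2
    · exact absurd (h2.trans h1.symm) hvv
    · subst h1; simpa using hv
    · subst h2; simpa using hw
    · simp
  have heq : monomial d c = monomial (d - pr) c * monomial pr 1 := by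
    rw [monomial_mul, mul_one, tsub_add_cancel_of_le hle]
  rw [heq]
  exact Ideal.mul_mem_left _ _ hI

lemma X_mul_X (a b : DVar r s) :
    (X a : MvPolynomial (DVar r s) F) * X b
      = monomial (Finsupp.single a 1 + Finsupp.single b 1) 1 := by
  rw [X, X, monomial_mul, mul_one]

lemma pair_mem_GSet (lam : Fin r → F) (p : ℕ) (v : DVar r s) :
    monomial (Finsupp.single v 1 + Finsupp.single (dswap v) 1) (1 : F)
      ∈ GSet F r s p lam := by
  apply Set.mem_union_right
  rcases v with (i | i) | (j | j)
  · exact Or.inl ⟨i, by rw [X_mul_X]; rfl⟩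
  · exact Or.inl ⟨i, by rw [X_mul_X]; show _ = monomial _ _; rw [add_comm]; rfl⟩
  · exact Or.inr ⟨j, by rw [X_mul_X]; rfl⟩
  · exact Or.inr ⟨j, by rw [X_mul_X]; show _ = monomial _ _; rw [add_comm]; rfl⟩

lemma pair_single_ne_zero (v : DVar r s) :
    (Finsupp.single v 1 + Finsupp.single (dswap v) 1 : DVar r s →₀ ℕ) ≠ 0 := by
  intro h
  have h2 := congrFun (congrArg (fun e : DVar r s →₀ ℕ => (e : DVar r s → ℕ)) h) v
  simp [Finsupp.single_apply] at h2

lemma pair_invariant {lam : Fin r → F} (hl0 : ∀ i, lam i ≠ 0) (v : DVar r s) :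
    sigmaMap F r s (monomial (Finsupp.single v 1 + Finsupp.single (dswap v) 1) (1 : F))
        = monomial (Finsupp.single v 1 + Finsupp.single (dswap v) 1) 1 ∧
      rhoMap F r s lam (monomial (Finsupp.single v 1 + Finsupp.single (dswap v) 1) (1 : F))
        = monomial (Finsupp.single v 1 + Finsupp.single (dswap v) 1) 1 ∧
      constantCoeff (monomial (Finsupp.single v 1 + Finsupp.single (dswap v) 1) (1 : F)) = 0 := by
  refine ⟨?_, ?_, ?_⟩
  · rw [sigmaMap_monomial, sde_add, sde_single, sde_single, dswap_dswap, add_comm]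
  · rw [rhoMap_monomial, chi_add, chi_single, chi_single, pow_one, pow_one,
      rhoCoeff_dswap, mul_inv_cancel₀ (rhoCoeff_ne_zero hl0 v), mul_one]
  · rw [constantCoeff_monomial, if_neg (pair_single_ne_zero v)]

lemma pair_mem_hilbert {lam : Fin r → F} (hl0 : ∀ i, lam i ≠ 0) (v : DVar r s) :
    monomial (Finsupp.single v 1 + Finsupp.single (dswap v) 1) (1 : F)
      ∈ HilbertIdeal F r s lam := by
  obtain ⟨h1, h2, h3⟩ := pair_invariant (r := r) (s := s) hl0 v
  exact Ideal.subset_span ⟨h1, h2, h3⟩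

lemma keyB [CharP F 2] {p : ℕ} (hp : p.Prime) {ζ : F} (hζ : IsPrimitiveRoot ζ p)
    {lam : Fin r → F} (hl0 : ∀ i, lam i ≠ 0) (hlam : ∀ i, lam i ^ p = 1) :
    ∀ (n : ℕ) (d : DVar r s →₀ ℕ), (d.sum fun _ m => m) ≤ n → chi lam d = 1 → d ≠ 0 →
      monomial d (1 : F) + monomial (sde d) 1 ∈ Ideal.span (GSet F r s p lam) := by
  classical
  obtain ⟨w, hw⟩ := chi_link (r := r) (s := s) hp hζ hlam
  intro n
  induction n with
  | zero =>
    intro d hdeg _ h0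
    exact absurd ((degree_zero_iff d).1 (Nat.le_zero.1 hdeg)) h0
  | succ n ih =>
    intro d hdeg hchi h0
    by_cases hfix : sde d = d
    · rw [hfix, poly_add_self]
      exact Ideal.zero_mem _
    · by_cases hdp : (d.sum fun _ m => m) ≤ p
      · apply Ideal.subset_span
        apply Set.mem_union_left
        apply Set.mem_union_left
        refine ⟨monomial d 1, ⟨d, rfl⟩, ?_, ?_, ?_, ?_⟩
        · rw [rhoMap_monomial, hchi, mul_one]
        · rw [sigmaMap_monomial]
          intro hcon
          exact hfix (monomial_one_inj hcon)
        · rw [totalDegree_monomial _ (one_ne_zero (α := F))]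
          exact hdp
        · rw [sigmaMap_monomial]
      · push_neg at hdp
        obtain ⟨b, hble, hb0, hbp, hbw⟩ := exists_zerosum hp w d (le_of_lt hdp)
        have hchib : chi lam b = 1 := (hw b).2 hbw
        set c : DVar r s →₀ ℕ := d - b with hc
        have hdbc : d = b + c := by
          rw [hc, add_comm, tsub_add_cancel_of_le hble]
        have hdegsum : (d.sum fun _ m => m) = (b.sum fun _ m => m) + (c.sum fun _ m => m) := by
          conv_lhs => rw [hdbc]
          exact degree_add b c
        have hchic : chi lam c = 1 := by
          have h2 := chi_add lam b c
          rw [← hdbc, hchi, hchib, one_mul] at h2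
          exact h2.symm
        have hc0 : c ≠ 0 := by
          intro h
          rw [h] at hdegsum
          simp at hdegsum
          omega
        have hb1 : 1 ≤ b.sum fun _ m => m := by
          rcases Nat.eq_zero_or_pos (b.sum fun _ m => m) with h | h
          · exact absurd ((degree_zero_iff b).1 h) hb0
          · exact h
        have hid : monomial d (1 : F) + monomial (sde d) 1
            = (monomial b 1 + monomial (sde b) 1) * monomial c 1
              + monomial (sde b) 1 * (monomial c 1 + monomial (sde c) 1) := by
          simp only [add_mul, mul_add, monomial_mul, one_mul]
          rw [show ∀ x t y : MvPolynomial (DVar r s) F, (x + t) + (t + y) = x + (t + t) + y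
            from fun x t y => by ring, poly_add_self, add_zero]
          rw [← sde_add, ← hdbc]
        rw [hid]
        refine Ideal.add_mem _ ?_ ?_
        · exact Ideal.mul_mem_right _ _ (ih b (by omega) hchib hb0)
        · exact Ideal.mul_mem_left _ _ (ih c (by omega) hchic hc0)


lemma main_reverse [CharP F 2] {p : ℕ} (hp : p.Prime) {ζ : F} (hζ : IsPrimitiveRoot ζ p)
    {lam : Fin r → F} (hl0 : ∀ i, lam i ≠ 0) (hlam : ∀ i, lam i ^ p = 1) :
    ∀ (N : ℕ) (f : MvPolynomial (DVar r s) F), f.support.card ≤ N →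
      sigmaMap F r s f = f → rhoMap F r s lam f = f → constantCoeff f = 0 →
      f ∈ Ideal.span (GSet F r s p lam) := by
  classical
  intro N
  induction N with
  | zero =>
    intro f hcard _ _ _
    have : f = 0 := by
      rw [← support_eq_empty, ← Finset.card_eq_zero]
      omega
    rw [this]
    exact Ideal.zero_mem _
  | succ N ih =>
    intro f hcard hsig hrho hcc
    by_cases hf0 : f = 0
    · rw [hf0]; exact Ideal.zero_mem _
    obtain ⟨d, hd⟩ := Finset.nonempty_iff_ne_empty.2
      (fun h => hf0 (support_eq_empty.1 h))
    have hcd : coeff d f ≠ 0 := mem_support_iff.1 hd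
    have hd0 : d ≠ 0 := by
      rintro rfl
      rw [← constantCoeff_eq] at hcd
      exact hcd hcc
    have hchi : chi lam d = 1 := chi_eq_one_of_mem_support hrho hcd
    by_cases hfix : sde d = d
    · -- σ-fixed monomial: divisible by a pair
      obtain ⟨v, hv⟩ : ∃ v, d v ≠ 0 := by
        by_contra h
        push_neg at h
        exact hd0 (Finsupp.ext fun v => h v)
      have hv2 : d (dswap v) ≠ 0 := by
        have h3 : sde d v = d v := by rw [hfix]
        rw [sde_apply] at h3
        omega
      set piece : MvPolynomial (DVar r s) F := monomial d (coeff d f) with hpiece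
      have hpmem : piece ∈ Ideal.span (GSet F r s p lam) :=
        monomial_mem_of_pair_le (Ideal.subset_span (pair_mem_GSet lam p v))
          (Nat.one_le_iff_ne_zero.2 hv) (Nat.one_le_iff_ne_zero.2 hv2) _
      have hsupp : (f - piece).support ⊆ f.support.erase d := by
        intro e he
        rw [mem_support_iff] at he
        rw [Finset.mem_erase, mem_support_iff]
        rcases eq_or_ne e d with rfl | hne
        · exfalso
          apply he
          rw [coeff_sub, hpiece, coeff_monomial, if_pos rfl, sub_self]
        · refine ⟨hne, ?_⟩
          intro h4
          apply he
          rw [coeff_sub, hpiece, coeff_monomial, if_neg (fun h5 => hne h5.symm), h4, sub_zero]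
      have hrest : f - piece ∈ Ideal.span (GSet F r s p lam) := by
        apply ih
        · have h6 := Finset.card_le_card hsupp
          have h7 := Finset.card_erase_of_mem hd
          omega
        · rw [map_sub, hsig, hpiece, sigmaMap_monomial, hfix]
        · rw [map_sub, hrho, hpiece, rhoMap_monomial, hchi, mul_one]
        · rw [map_sub, hcc, hpiece, constantCoeff_monomial, if_neg hd0, sub_zero]
      have h8 : f = (f - piece) + piece := by ring
      rw [h8]
      exact Ideal.add_mem _ hrest hpmem
    · -- orbit of size two
      set c : F := coeff d f with hcf
      set piece : MvPolynomial (DVar r s) F := monomial d c + monomial (sde d) c with hpiece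
      have hpmem : piece ∈ Ideal.span (GSet F r s p lam) := by
        have h9 : piece = C c * (monomial d 1 + monomial (sde d) 1) := by
          rw [hpiece, mul_add, C_mul_monomial, C_mul_monomial, mul_one]
        rw [h9]
        exact Ideal.mul_mem_left _ _
          (keyB hp hζ hl0 hlam (d.sum fun _ m => m) d le_rfl hchi hd0)
      have hcsd : coeff (sde d) f = c := coeff_of_sigma_inv hsig d
      have hsd0 : sde d ≠ 0 := fun h => hd0 (sde_eq_zero_iff.1 h)
      have hcoeffpiece : ∀ e, coeff e piece
          = (if d = e then c else 0) + (if sde d = e then c else 0) := by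
        intro e
        rw [hpiece, coeff_add, coeff_monomial, coeff_monomial]
      have hsupp : (f - piece).support ⊆ f.support.erase d := by
        intro e he
        rw [mem_support_iff] at he
        rw [Finset.mem_erase, mem_support_iff]
        rcases eq_or_ne e d with rfl | hne
        · exfalso
          apply he
          rw [coeff_sub, hcoeffpiece, if_pos rfl, if_neg hfix, add_zero, sub_self]
        · refine ⟨hne, ?_⟩
          intro h4
          apply he
          rcases eq_or_ne e (sde d) with rfl | hne2
          · exact absurd (by rw [← hcsd, h4]) hcd
          · rw [coeff_sub, hcoeffpiece, if_neg (fun h5 => hne h5.symm),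
              if_neg (fun h5 => hne2 h5.symm), add_zero, h4, sub_zero]
      have hrest : f - piece ∈ Ideal.span (GSet F r s p lam) := by
        apply ih
        · have h6 := Finset.card_le_card hsupp
          have h7 := Finset.card_erase_of_mem hd
          omega
        · rw [map_sub, hsig, hpiece, map_add, sigmaMap_monomial, sigmaMap_monomial,
            sde_sde, add_comm (monomial (sde d) c)]
        · rw [map_sub, hrho, hpiece, map_add, rhoMap_monomial, rhoMap_monomial, hchi,
            chi_sde, hchi, inv_one, mul_one]
        · rw [map_sub, hcc, hpiece, map_add, constantCoeff_monomial, if_neg hd0,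
            constantCoeff_monomial, if_neg hsd0, add_zero, sub_zero]
      have h8 : f = (f - piece) + piece := by ring
      rw [h8]
      exact Ideal.add_mem _ hrest hpmem

lemma triple_mem {lam : Fin r → F} {f : MvPolynomial (DVar r s) F}
    (h1 : sigmaMap F r s f = f) (h2 : rhoMap F r s lam f = f) (h3 : constantCoeff f = 0) :
    f ∈ HilbertIdeal F r s lam :=
  Ideal.subset_span ⟨h1, h2, h3⟩

lemma orbit_mem_hilbert {lam : Fin r → F} {d : DVar r s →₀ ℕ}
    (hchi : chi lam d = 1) (hd0 : d ≠ 0) :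
    monomial d (1 : F) + monomial (sde d) 1 ∈ HilbertIdeal F r s lam := by
  have hsd0 : sde d ≠ 0 := fun h => hd0 (sde_eq_zero_iff.1 h)
  apply triple_mem
  · rw [map_add, sigmaMap_monomial, sigmaMap_monomial, sde_sde, add_comm]
  · rw [map_add, rhoMap_monomial, rhoMap_monomial, hchi, chi_sde, hchi, inv_one, mul_one]
  · rw [map_add, constantCoeff_monomial, if_neg hd0, constantCoeff_monomial,
      if_neg hsd0, add_zero]

lemma forward_ii [CharP F 2] {lam : Fin r → F} (hl0 : ∀ i, lam i ≠ 0)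
    {v : DVar r s} {d : DVar r s →₀ ℕ} (hchi : chi lam d = 1) (hdv : d v ≠ 0) :
    (X v : MvPolynomial (DVar r s) F) * monomial d 1 ∈ HilbertIdeal F r s lam := by
  classical
  have hd0 : d ≠ 0 := by
    rintro rfl
    simp at hdv
  by_cases hfix : sde d = d
  · have hXm : (X v : MvPolynomial (DVar r s) F) * monomial d 1
        = monomial (Finsupp.single v 1 + d) 1 := by
      rw [X, monomial_mul, one_mul]
    rw [hXm]
    have hdw : d (dswap v) = d v := by
      have h3 : sde d v = d v := by rw [hfix]
      rw [sde_apply] at h3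
      exact h3
    apply monomial_mem_of_pair_le (pair_mem_hilbert hl0 v)
    · rw [Finsupp.add_apply, Finsupp.single_eq_same]
      omega
    · rw [Finsupp.add_apply, Finsupp.single_apply,
        if_neg (fun h => (dswap_ne v) h.symm), hdw]
      omega
  · have hsplit : (X v : MvPolynomial (DVar r s) F) * monomial d 1
        = X v * (monomial d 1 + monomial (sde d) 1) + X v * monomial (sde d) 1 := by
      rw [mul_add, add_assoc, poly_add_self, add_zero]
    rw [hsplit]
    refine Ideal.add_mem _ (Ideal.mul_mem_left _ _ (orbit_mem_hilbert hchi hd0)) ?_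
    have hXm : (X v : MvPolynomial (DVar r s) F) * monomial (sde d) 1
        = monomial (Finsupp.single v 1 + sde d) 1 := by
      rw [X, monomial_mul, one_mul]
    rw [hXm]
    apply monomial_mem_of_pair_le (pair_mem_hilbert hl0 v)
    · rw [Finsupp.add_apply, Finsupp.single_eq_same]
      omega
    · rw [Finsupp.add_apply, Finsupp.single_apply,
        if_neg (fun h => (dswap_ne v) h.symm), sde_apply, dswap_dswap]
      omega

lemma forward [CharP F 2] {p : ℕ} {lam : Fin r → F} (hl0 : ∀ i, lam i ≠ 0) :
    ∀ g ∈ GSet F r s p lam, g ∈ HilbertIdeal F r s lam := by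
  classical
  rintro g hg
  rcases hg with (⟨m, ⟨d, rfl⟩, hrho, hne, _, rfl⟩ | ⟨m, v, ⟨d, rfl⟩, hrho, _, hdvd, rfl⟩)
    | (⟨i, rfl⟩ | ⟨j, rfl⟩)
  · have hchi : chi lam d = 1 := chi_eq_one_of_rho_fixed hrho
    have hd0 : d ≠ 0 := by
      rintro rfl
      apply hne
      rw [sigmaMap_monomial, show sde (0 : DVar r s →₀ ℕ) = 0 from sde_eq_zero_iff.2 rfl]
    rw [sigmaMap_monomial]
    exact orbit_mem_hilbert hchi hd0
  · have hchi : chi lam d = 1 := chi_eq_one_of_rho_fixed hrho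
    have hdv : d v ≠ 0 := by
      rcases X_dvd_monomial.1 hdvd with h | h
      · exact absurd h one_ne_zero
      · exact h
    exact forward_ii hl0 hchi hdv
  · rw [X_mul_X]
    exact pair_mem_hilbert hl0 (Sum.inl (Sum.inl i))
  · rw [X_mul_X]
    exact pair_mem_hilbert hl0 (Sum.inr (Sum.inl j))

end DihedralAux

theorem GSet_subset_and_span_eq_hilbertIdeal
    {F : Type*} [Field F] [CharP F 2] {r s p : ℕ} (hp : p.Prime) (hodd : Odd p)
    (ζ : F) (hζ : IsPrimitiveRoot ζ p)
    (lam : Fin r → F) (hlam : ∀ i, lam i ^ p = 1 ∧ lam i ≠ 1) :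
    (∀ g ∈ GSet F r s p lam, g ∈ HilbertIdeal F r s lam) ∧
    Ideal.span (GSet F r s p lam) = HilbertIdeal F r s lam := by
  have hlam1 : ∀ i, lam i ^ p = 1 := fun i => (hlam i).1
  have hl0 : ∀ i, lam i ≠ 0 := by
    intro i h
    have h2 := hlam1 i
    rw [h, zero_pow hp.ne_zero] at h2
    exact zero_ne_one h2
  have fwd : ∀ g ∈ GSet F r s p lam, g ∈ HilbertIdeal F r s lam :=
    DihedralAux.forward hl0
  refine ⟨fwd, le_antisymm ?_ ?_⟩
  · exact Ideal.span_le.2 fun g hg => fwd g hg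
  · show Ideal.span _ ≤ _
    apply Ideal.span_le.2
    rintro f ⟨h1, h2, h3⟩
    exact DihedralAux.main_reverse hp hζ hl0 hlam1 f.support.card f le_rfl h1 h2 h3
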